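/- Let T be a contraction on a complex separable Hilbert space H and let U^[T] be its Schaffer operator on ℓ²(ℤ; H). Let ι : H → ℓ²(ℤ; H) be the isometric embedding sending x to the sequence whose 0-th entry is x and all other entries are 0. Then U^[T] is a unitary dilation of T: for every integer n ≥ 0 and all x, y ∈ H, ⟨(U^[T])ⁿ ι x, ι y⟩ = ⟨Tⁿ x, y⟩. -/

import Mathlib

open ContinuousLinearMap MeasureTheory Polynomial
noncomputable section

variable {H : Type} [NormedAddCommGroup H] [InnerProductSpace ℂ H] [CompleteSpace H]

/-- A canonical orthonormal (Hilbert) basis set of the Hilbert space `H`. -/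
def stdONSet (H : Type) [NormedAddCommGroup H] [InnerProductSpace ℂ H] [CompleteSpace H] :
    Set H := (exists_hilbertBasis ℂ H).choose

/-- The diagonal sum of an operator with respect to the canonical orthonormal basis; for a
trace class operator this is its trace. -/
def opTrace (T : H →L[ℂ] H) : ℂ := ∑' x : stdONSet H, inner ℂ (x : H) (T x)

/-- `A ^ r` for a positive operator `A`, via the continuous functional calculus. -/
def opPow (A : H →L[ℂ] H) (r : ℝ) : H →L[ℂ] H := cfc (fun x : ℝ => x ^ r) A

/-- Membership in the Schatten–von Neumann class `S_p`: the diagonal sum of the positive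
operator `|T|^p = (T^*T)^{p/2}` with respect to an orthonormal basis is finite. -/
def MemSchatten (p : ℝ) (T : H →L[ℂ] H) : Prop :=
  Summable fun x : stdONSet H =>
    Complex.re (inner ℂ (x : H) ((opPow (adjoint T * T) (p / 2)) x))

/-- The defect operator `D_T = (I - T^*T)^{1/2}` of a contraction `T`. -/
def defect (T : H →L[ℂ] H) : H →L[ℂ] H := opPow (1 - adjoint T * T) (1 / 2)

/-- The defining formula of the Schaffer matrix dilation of a contraction `T`, acting on
two-sided square-summable `H`-valued sequences: the `0`-th entry of the image is
`T v₀ + D_{T*} v₁`, the `(-1)`-st entry is `D_T v₀ - T^* v₁`, and the `j`-th entry is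
`v_{j+1}` for `j ∉ {0, -1}`. -/
def schafferFun (T : H →L[ℂ] H) (v : lp (fun _ : ℤ => H) 2) : ℤ → H := fun j =>
  if j = 0 then T (v 0) + defect (adjoint T) (v 1)
  else if j = -1 then defect T (v 0) - adjoint T (v 1)
  else v (j + 1)

/-- The Schaffer operator `U^[T]` is a unitary dilation of `T`: compressing its powers to
the subspace `ι(H)` (the `0`-th coordinate copy of `H`) gives the powers of `T`. -/
theorem schaffer_operator_is_dilation
    [TopologicalSpace.SeparableSpace H]
    (T : H →L[ℂ] H) (hT : ‖T‖ ≤ 1)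
    (U : lp (fun _ : ℤ => H) 2 →L[ℂ] lp (fun _ : ℤ => H) 2)
    (hU : ∀ (v : lp (fun _ : ℤ => H) 2) (j : ℤ), (U v) j = schafferFun T v j) :
    ∀ (n : ℕ) (x y : H),
      (inner ℂ ((U ^ n) (lp.single 2 (0 : ℤ) x)) (lp.single 2 (0 : ℤ) y) : ℂ) =
        (inner ℂ ((T ^ n) x) y : ℂ) := by
  intro n x y
  have key : ∀ n : ℕ, ∀ x : H,
      (∀ j : ℤ, 0 < j → ((U ^ n) (lp.single 2 (0 : ℤ) x)) j = 0) ∧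
      ((U ^ n) (lp.single 2 (0 : ℤ) x)) 0 = (T ^ n) x := by
    intro n
    induction n with
    | zero =>
      intro x
      constructor
      · intro j hj
        rw [pow_zero, ContinuousLinearMap.one_apply, lp.single_apply]
        exact dif_neg hj.ne'
      · rw [pow_zero, ContinuousLinearMap.one_apply, pow_zero, ContinuousLinearMap.one_apply, lp.single_apply_self]
    | succ n ih =>
      intro x
      obtain ⟨h1, h0⟩ := ih x
      have hpow : (U ^ (n + 1)) (lp.single 2 (0 : ℤ) x)
          = U ((U ^ n) (lp.single 2 (0 : ℤ) x)) := by
        rw [pow_succ', ContinuousLinearMap.mul_apply]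
      constructor
      · intro j hj
        rw [hpow, hU, schafferFun]
        have hj0 : j ≠ 0 := hj.ne'
        have hjm1 : j ≠ -1 := by omega
        simp only [hj0, hjm1, if_false]
        exact h1 (j + 1) (by omega)
      · rw [hpow, hU, schafferFun]
        simp only [if_pos rfl, h0, h1 1 one_pos, map_zero, add_zero, pow_succ']
        rfl
  obtain ⟨h1, h0⟩ := key n x
  rw [lp.inner_single_right, h0]
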